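/- Let Y(z) = (1/2)·tanh(z/2 + φ₀), so Y' = -Y² + 1/4. Then for any C₀ ∈ ℝ, the function y(z) = 9/2 + C₀ - 15Y - 30Y² + 60Y³ satisfies the Kuramoto–Sivashinsky travelling-wave equation y''' + y² + 4y'' + y' - 2C₀y + C₀² - 9 = 0 on ℝ. -/

import Mathlib

lemma hasDerivAt_tanh' (x : ℝ) : HasDerivAt Real.tanh (1 - Real.tanh x ^ 2) x := by
  have hc : Real.cosh x ≠ 0 := ne_of_gt (Real.cosh_pos x)
  have h : HasDerivAt (fun x => Real.sinh x / Real.cosh x)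
      ((Real.cosh x * Real.cosh x - Real.sinh x * Real.sinh x) / Real.cosh x ^ 2) x :=
    (Real.hasDerivAt_sinh x).div (Real.hasDerivAt_cosh x) hc
  have heq : (fun x => Real.sinh x / Real.cosh x) = Real.tanh := by
    funext t; rw [Real.tanh_eq_sinh_div_cosh]
  rw [heq] at h
  convert h using 1
  rw [Real.tanh_eq_sinh_div_cosh]
  have h2 : Real.cosh x ^ 2 - Real.sinh x ^ 2 = 1 := Real.cosh_sq_sub_sinh_sq x
  field_simp

/-- Exact solution of the Kuramoto–Sivashinsky travelling-wave equation with σ = 4. -/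
theorem ks_exact_solution_sigma4 (φ₀ C₀ : ℝ)
    (Y : ℝ → ℝ) (hYdef : Y = fun z => (1 / 2) * Real.tanh (z / 2 + φ₀))
    (y : ℝ → ℝ)
    (hydef : y = fun z => 9 / 2 + C₀ - 15 * Y z - 30 * (Y z) ^ 2 + 60 * (Y z) ^ 3) :
    (∀ z, deriv Y z = -(Y z) ^ 2 + 1 / 4) ∧
      ∀ z, deriv (deriv (deriv y)) z + (y z) ^ 2 + 4 * deriv (deriv y) z
        + deriv y z - 2 * C₀ * y z + C₀ ^ 2 - 9 = 0 := by
  have hY : ∀ z, HasDerivAt Y (-(Y z) ^ 2 + 1 / 4) z := by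
    intro z
    have h1 : HasDerivAt (fun z : ℝ => z / 2 + φ₀) (1 / 2) z := by
      simpa using ((hasDerivAt_id z).div_const 2).add_const φ₀
    have h2 := ((hasDerivAt_tanh' (z / 2 + φ₀)).comp z h1).const_mul (1 / 2 : ℝ)
    rw [hYdef]
    refine h2.congr_deriv ?_
    beta_reduce
    ring
  -- first derivative of y
  have h1 : ∀ z, HasDerivAt y
      (-180 * (Y z)^4 + 60 * (Y z)^3 + 60 * (Y z)^2 - 15 * (Y z) - 15/4) z := by
    intro z
    rw [hydef]
    have h := hY z
    have := (((hasDerivAt_const z (9/2 + C₀)).sub (h.const_mul 15)).sub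
      ((h.pow 2).const_mul 30)).add ((h.pow 3).const_mul 60)
    refine this.congr_deriv ?_
    push_cast
    ring
  have hd1 : deriv y = fun z =>
      -180 * (Y z)^4 + 60 * (Y z)^3 + 60 * (Y z)^2 - 15 * (Y z) - 15/4 :=
    funext fun z => (h1 z).deriv
  have h2 : ∀ z, HasDerivAt (deriv y)
      (720 * (Y z)^5 - 180 * (Y z)^4 - 300 * (Y z)^3 + 60 * (Y z)^2 + 30 * (Y z) - 15/4) z := by
    intro z
    rw [hd1]
    have h := hY z
    have := (((((h.pow 4).const_mul (-180)).add ((h.pow 3).const_mul 60)).add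
      ((h.pow 2).const_mul 60)).sub (h.const_mul 15)).sub_const (15/4)
    refine this.congr_deriv ?_
    push_cast
    ring
  have hd2 : deriv (deriv y) = fun z =>
      720 * (Y z)^5 - 180 * (Y z)^4 - 300 * (Y z)^3 + 60 * (Y z)^2 + 30 * (Y z) - 15/4 :=
    funext fun z => (h2 z).deriv
  have h3 : ∀ z, HasDerivAt (deriv (deriv y))
      (-3600 * (Y z)^6 + 720 * (Y z)^5 + 1800 * (Y z)^4 - 300 * (Y z)^3
        - 255 * (Y z)^2 + 30 * (Y z) + 15/2) z := by
    intro z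
    rw [hd2]
    have h := hY z
    have := ((((((h.pow 5).const_mul 720).sub ((h.pow 4).const_mul 180)).sub
      ((h.pow 3).const_mul 300)).add ((h.pow 2).const_mul 60)).add
      (h.const_mul 30)).sub_const (15/4)
    refine this.congr_deriv ?_
    push_cast
    ring
  have hd3 : deriv (deriv (deriv y)) = fun z =>
      -3600 * (Y z)^6 + 720 * (Y z)^5 + 1800 * (Y z)^4 - 300 * (Y z)^3
        - 255 * (Y z)^2 + 30 * (Y z) + 15/2 :=
    funext fun z => (h3 z).deriv
  constructor
  · intro z; exact (hY z).deriv
  · intro z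
    rw [hd3, hd2, hd1, hydef]
    ring
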